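/- Let g : ℝ → ℝ be bounded, right-continuous, of bounded variation with total variation T_g, and with lim_{x → −∞} g(x) = 0, and let f : ℝ → [0, ∞) be a bounded probability density. Then for all s, t ∈ ℝ, ∫_ℝ (g(t − u) − g(s − u))² f(u) du ≤ 2 ‖g‖_∞ ‖f‖_∞ T_g |t − s|, where ‖·‖_∞ denotes the supremum norm. In particular, if ρ²(s, t) := ∫_ℝ (g(t − u) − g(s − u))² f(u) du, the identity map from (ℝ, |·|) to (ℝ, ρ) is uniformly continuous. -/

import Mathlib

open MeasureTheory Filter

lemma key_sum (g : ℝ → ℝ) {h : ℝ} (hh : 0 < h) (x : ℝ) :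
    ∑' k : ℤ, (‖g (x + (k + 1) * h) - g (x + k * h)‖₊ : ENNReal) ≤ eVariationOn g Set.univ := by
  rw [ENNReal.tsum_eq_iSup_sum]
  refine iSup_le fun F => ?_
  obtain ⟨N, hN⟩ : ∃ N : ℕ, ∀ k ∈ F, k ∈ Finset.Icc (-(N:ℤ)) N :=
    ⟨F.sup (fun k => k.natAbs), fun k hk => by
      have h1 : k.natAbs ≤ F.sup (fun k => k.natAbs) := Finset.le_sup hk
      simp only [Finset.mem_Icc]; omega⟩
  calc ∑ k ∈ F, (‖g (x + (k + 1) * h) - g (x + k * h)‖₊ : ENNReal)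
      ≤ ∑ k ∈ Finset.Icc (-(N:ℤ)) N, (‖g (x + (k + 1) * h) - g (x + k * h)‖₊ : ENNReal) :=
        Finset.sum_le_sum_of_subset (fun k hk => hN k hk)
    _ ≤ eVariationOn g Set.univ := by
        set u : ℕ → ℝ := fun j => x + ((j : ℤ) - N) * h with hu
        have hmono : Monotone u := by
          intro a b hab
          simp only [hu]
          have h1 : ((a:ℤ):ℝ) ≤ ((b:ℤ):ℝ) := by exact_mod_cast hab
          nlinarith
        have hicc : Finset.Icc (-(N:ℤ)) N =
            (Finset.range (2*N+1)).map ⟨fun j : ℕ => (j:ℤ) - N, by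
              have hinj : Function.Injective (fun j : ℕ => (j:ℤ) - N) := by
                intro a b hab; dsimp at hab; omega
              exact hinj⟩ := by
          ext k; simp only [Finset.mem_Icc, Finset.mem_map, Finset.mem_range,
            Function.Embedding.coeFn_mk]
          constructor
          · intro hk; exact ⟨(k + N).toNat, by omega, by omega⟩
          · rintro ⟨j, hj, rfl⟩; omega
        rw [hicc, Finset.sum_map]
        have := eVariationOn.sum_le (f := g) (n := 2*N+1) hmono (fun i => Set.mem_univ (u i))
        refine le_trans (le_of_eq ?_) this
        apply Finset.sum_congr rfl
        intro j _
        simp only [Function.Embedding.coeFn_mk, hu]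
        rw [edist_dist, Real.dist_eq, ← Real.enorm_eq_ofReal_abs, enorm_eq_nnnorm]
        congr 2 <;> push_cast <;> ring

lemma key (g : ℝ → ℝ) (hg : Measurable g) {h : ℝ} (hh : 0 < h) :
    ∫⁻ x, (‖g (x + h) - g x‖₊ : ENNReal) ≤ eVariationOn g Set.univ * ENNReal.ofReal h := by
  set φ : ℝ → ENNReal := fun x => (‖g (x + h) - g x‖₊ : ENNReal) with hφ
  have hφm : Measurable φ := ((hg.comp (measurable_id.add_const h)).sub hg).nnnorm.coe_nnreal_ennreal
  have hU : (⋃ k : ℤ, Set.Ico ((k:ℝ) * h) ((k+1) * h)) = Set.univ := by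
    ext x
    simp only [Set.mem_iUnion, Set.mem_Ico, Set.mem_univ, iff_true]
    refine ⟨⌊x / h⌋, ?_, ?_⟩
    · calc ((⌊x/h⌋:ℝ)) * h ≤ (x/h) * h := by
            exact mul_le_mul_of_nonneg_right (Int.floor_le _) hh.le
        _ = x := div_mul_cancel₀ x hh.ne'
    · calc x = (x/h) * h := (div_mul_cancel₀ x hh.ne').symm
        _ < (↑⌊x/h⌋ + 1) * h := by
            exact mul_lt_mul_of_pos_right (Int.lt_floor_add_one _) hh
  have hdisj : Pairwise (Function.onFun Disjoint fun k : ℤ =>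
      Set.Ico ((k:ℝ) * h) ((k+1) * h)) := by
    intro k l hkl
    rw [Function.onFun, Set.Ico_disjoint_Ico]
    rcases lt_or_gt_of_ne hkl with hlt | hlt
    · refine le_trans (min_le_left _ _) (le_max_of_le_right ?_)
      have : (k:ℝ) + 1 ≤ l := by exact_mod_cast hlt
      nlinarith
    · refine le_trans (min_le_right _ _) (le_max_of_le_left ?_)
      have : (l:ℝ) + 1 ≤ k := by exact_mod_cast hlt
      nlinarith
  have hmeas : ∀ k : ℤ, MeasurableSet (Set.Ico ((k:ℝ) * h) ((k+1) * h)) :=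
    fun k => measurableSet_Ico
  calc ∫⁻ x, φ x = ∫⁻ x in ⋃ k : ℤ, Set.Ico ((k:ℝ) * h) ((k+1) * h), φ x := by
        rw [hU, Measure.restrict_univ]
    _ = ∑' k : ℤ, ∫⁻ x in Set.Ico ((k:ℝ) * h) ((k+1) * h), φ x :=
        lintegral_iUnion hmeas hdisj φ
    _ = ∑' k : ℤ, ∫⁻ x in Set.Ico (0:ℝ) h, φ (x + k * h) := by
        refine tsum_congr fun k => ?_
        rw [← lintegral_indicator (hmeas k) _, ← lintegral_indicator measurableSet_Ico _]
        have := lintegral_add_right_eq_self (μ := volume)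
          (fun x => Set.indicator (Set.Ico ((k:ℝ) * h) ((k+1) * h)) φ x) ((k:ℝ) * h)
        rw [← this]
        refine lintegral_congr fun x => ?_
        by_cases hx : x ∈ Set.Ico (0:ℝ) h
        · rw [Set.indicator_of_mem hx, Set.indicator_of_mem]
          simp only [Set.mem_Ico] at hx ⊢
          constructor <;> nlinarith [hx.1, hx.2]
        · rw [Set.indicator_of_notMem hx, Set.indicator_of_notMem]
          simp only [Set.mem_Ico] at hx ⊢
          intro hc; apply hx; constructor <;> nlinarith [hc.1, hc.2]
    _ = ∫⁻ x in Set.Ico (0:ℝ) h, ∑' k : ℤ, φ (x + k * h) := by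
        rw [← lintegral_tsum]
        exact fun k => (hφm.comp (measurable_id.add_const _)).aemeasurable
    _ ≤ ∫⁻ _ in Set.Ico (0:ℝ) h, eVariationOn g Set.univ := by
        refine lintegral_mono fun x => ?_
        have := key_sum g hh x
        refine le_trans (le_of_eq (tsum_congr fun k => ?_)) this
        simp only [hφ]
        congr 2
        ring
    _ = eVariationOn g Set.univ * ENNReal.ofReal h := by
        rw [setLIntegral_const, Real.volume_Ico, sub_zero]


lemma bound_aux (g f : ℝ → ℝ) (hgm : Measurable g) (hbv : BoundedVariationOn g Set.univ)
    (hf0 : ∀ x, 0 ≤ f x) (hf_meas : Measurable f)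
    (Mg Mf : ℝ) (hMg : ∀ x, |g x| ≤ Mg) (hMf : ∀ x, f x ≤ Mf)
    (s t : ℝ) (hst : s ≤ t) :
    ∫ u, (g (t - u) - g (s - u)) ^ 2 * f u ≤
      2 * Mg * Mf * (eVariationOn g Set.univ).toReal * (t - s) := by
  have hMg0 : 0 ≤ Mg := (abs_nonneg _).trans (hMg 0)
  have hMf0 : 0 ≤ Mf := (hf0 0).trans (hMf 0)
  rcases eq_or_lt_of_le hst with rfl | hlt
  · simp
  set h := t - s with hdef
  have hh : 0 < h := sub_pos.mpr hlt
  set T := (eVariationOn g Set.univ).toReal with hT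
  have hT0 : 0 ≤ T := ENNReal.toReal_nonneg
  set Δ : ℝ → ℝ := fun u => g (t - u) - g (s - u) with hΔ
  have hΔm : Measurable Δ :=
    (hgm.comp (measurable_const.sub measurable_id)).sub
      (hgm.comp (measurable_const.sub measurable_id))
  have hFm : Measurable (fun u => Δ u ^ 2 * f u) := (hΔm.pow_const 2).mul hf_meas
  have hF0 : ∀ u, 0 ≤ Δ u ^ 2 * f u := fun u => mul_nonneg (sq_nonneg _) (hf0 u)
  rw [integral_eq_lintegral_of_nonneg_ae (ae_of_all _ hF0) hFm.aestronglyMeasurable]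
  refine ENNReal.toReal_le_of_le_ofReal (by positivity) ?_
  set φ : ℝ → ENNReal := fun x => (‖g (x + h) - g x‖₊ : ENNReal) with hφ
  have hφm : Measurable φ :=
    ((hgm.comp (measurable_id.add_const h)).sub hgm).nnnorm.coe_nnreal_ennreal
  have step1 : ∀ u, ENNReal.ofReal (Δ u ^ 2 * f u) ≤ ENNReal.ofReal (2 * Mg * Mf) * φ (s - u) := by
    intro u
    have harg : (s - u) + h = t - u := by rw [hdef]; ring
    have hφval : φ (s - u) = ENNReal.ofReal |Δ u| := by
      rw [hφ]; dsimp only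
      rw [harg, ← enorm_eq_nnnorm, Real.enorm_eq_ofReal_abs]
    rw [hφval, ← ENNReal.ofReal_mul (by positivity)]
    apply ENNReal.ofReal_le_ofReal
    have h1 : |Δ u| ≤ 2 * Mg := by
      calc |Δ u| ≤ |g (t - u)| + |g (s - u)| := abs_sub _ _
        _ ≤ Mg + Mg := add_le_add (hMg _) (hMg _)
        _ = 2 * Mg := by ring
    have h2 : Δ u ^ 2 = |Δ u| * |Δ u| := by rw [abs_mul_abs_self, sq]
    have h3 := hf0 u
    have h4 := hMf u
    calc Δ u ^ 2 * f u = (|Δ u| * |Δ u|) * f u := by rw [h2]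
      _ ≤ (2 * Mg * |Δ u|) * f u :=
          mul_le_mul_of_nonneg_right (mul_le_mul_of_nonneg_right h1 (abs_nonneg _)) h3
      _ ≤ (2 * Mg * |Δ u|) * Mf := mul_le_mul_of_nonneg_left h4 (by positivity)
      _ = 2 * Mg * Mf * |Δ u| := by ring
  calc ∫⁻ u, ENNReal.ofReal (Δ u ^ 2 * f u)
      ≤ ∫⁻ u, ENNReal.ofReal (2 * Mg * Mf) * φ (s - u) := lintegral_mono step1
    _ = ENNReal.ofReal (2 * Mg * Mf) * ∫⁻ u, φ (s - u) :=
        lintegral_const_mul _ (hφm.comp (measurable_const.sub measurable_id))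
    _ = ENNReal.ofReal (2 * Mg * Mf) * ∫⁻ x, φ x := by
        rw [(Measure.measurePreserving_sub_left volume s).lintegral_comp hφm]
    _ ≤ ENNReal.ofReal (2 * Mg * Mf) * (eVariationOn g Set.univ * ENNReal.ofReal h) :=
        by gcongr; exact key g hgm hh
    _ = ENNReal.ofReal (2 * Mg * Mf * T * (t - s)) := by
        rw [← ENNReal.ofReal_toReal hbv, ← hT, ← ENNReal.ofReal_mul (by positivity),
          ← ENNReal.ofReal_mul (by positivity), ← hdef]
        congr 1
        ring


/-- Let `g : ℝ → ℝ` be bounded, right-continuous, of bounded variation with total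
variation `T_g` and `g(x) → 0` as `x → −∞`, and let `f` be a bounded probability density. Then
`∫ (g(t−u) − g(s−u))² f(u) du ≤ 2 ‖g‖_∞ ‖f‖_∞ T_g |t − s|` (stated with arbitrary upper bounds
`Mg ≥ ‖g‖_∞`, `Mf ≥ ‖f‖_∞`), and consequently the identity map from `(ℝ, |·|)` to `(ℝ, ρ)` with
`ρ(s,t) = (∫ (g(t−u) − g(s−u))² f(u) du)^{1/2}` is uniformly continuous. -/
theorem stmt14 (g f : ℝ → ℝ)
    (hg_bv : BoundedVariationOn g Set.univ)
    (hg_rc : ∀ x : ℝ, ContinuousWithinAt g (Set.Ici x) x)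
    (hg_lim : Tendsto g atBot (nhds 0))
    (hg_bdd : ∃ c : ℝ, ∀ x, |g x| ≤ c)
    (hf0 : ∀ x, 0 ≤ f x) (hf_bdd : ∃ c : ℝ, ∀ x, f x ≤ c)
    (hf_meas : Measurable f) (hf_int : Integrable f) (hf_dens : ∫ x, f x = 1) :
    (∀ Mg Mf : ℝ, (∀ x, |g x| ≤ Mg) → (∀ x, f x ≤ Mf) →
      ∀ s t : ℝ, ∫ u, (g (t - u) - g (s - u)) ^ 2 * f u ≤
        2 * Mg * Mf * (eVariationOn g Set.univ).toReal * |t - s|) ∧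
    (∀ ε : ℝ, 0 < ε → ∃ δ : ℝ, 0 < δ ∧ ∀ s t : ℝ, |s - t| < δ →
      Real.sqrt (∫ u, (g (t - u) - g (s - u)) ^ 2 * f u) < ε) := by
  have hgm : Measurable g := by
    obtain ⟨p, q, hp, hq, hpq⟩ :=
      hg_bv.locallyBoundedVariationOn.exists_monotoneOn_sub_monotoneOn
    rw [hpq]
    exact ((monotoneOn_univ.mp hp).measurable).sub ((monotoneOn_univ.mp hq).measurable)
  have main : ∀ Mg Mf : ℝ, (∀ x, |g x| ≤ Mg) → (∀ x, f x ≤ Mf) →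
      ∀ s t : ℝ, ∫ u, (g (t - u) - g (s - u)) ^ 2 * f u ≤
        2 * Mg * Mf * (eVariationOn g Set.univ).toReal * |t - s| := by
    intro Mg Mf hMg hMf s t
    rcases le_total s t with hst | hst
    · rw [abs_of_nonneg (sub_nonneg.mpr hst)]
      exact bound_aux g f hgm hg_bv hf0 hf_meas Mg Mf hMg hMf s t hst
    · have heq : ∀ u : ℝ, (g (t - u) - g (s - u)) ^ 2 * f u
          = (g (s - u) - g (t - u)) ^ 2 * f u := fun u => by ring
      rw [abs_of_nonpos (sub_nonpos.mpr hst)]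
      simp only [heq]
      have := bound_aux g f hgm hg_bv hf0 hf_meas Mg Mf hMg hMf t s hst
      linarith [this]
  refine ⟨main, ?_⟩
  intro ε hε
  obtain ⟨cg, hcg⟩ := hg_bdd
  obtain ⟨cf, hcf⟩ := hf_bdd
  have hcg0 : 0 ≤ cg := (abs_nonneg _).trans (hcg 0)
  have hcf0 : 0 ≤ cf := (hf0 0).trans (hcf 0)
  set C := 2 * cg * cf * (eVariationOn g Set.univ).toReal with hC
  have hC0 : 0 ≤ C := by
    have := ENNReal.toReal_nonneg (a := eVariationOn g Set.univ)
    positivity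
  refine ⟨ε ^ 2 / (2 * (C + 1)), by positivity, fun s t hst => ?_⟩
  have h0 : 0 ≤ ∫ u, (g (t - u) - g (s - u)) ^ 2 * f u :=
    integral_nonneg fun u => mul_nonneg (sq_nonneg _) (hf0 u)
  have hb := main cg cf hcg hcf s t
  rw [← hC] at hb
  have hlt : ∫ u, (g (t - u) - g (s - u)) ^ 2 * f u < ε ^ 2 := by
    have h1 : C * |t - s| ≤ C * (ε ^ 2 / (2 * (C + 1))) := by
      rw [abs_sub_comm]
      exact mul_le_mul_of_nonneg_left hst.le hC0
    have h2 : (C + 1) * (ε ^ 2 / (2 * (C + 1))) = ε ^ 2 / 2 := by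
      field_simp
    have h3 : C * (ε ^ 2 / (2 * (C + 1))) ≤ (C + 1) * (ε ^ 2 / (2 * (C + 1))) :=
      mul_le_mul_of_nonneg_right (by linarith) (by positivity)
    have h4 : 0 < ε ^ 2 := by positivity
    linarith
  calc Real.sqrt (∫ u, (g (t - u) - g (s - u)) ^ 2 * f u)
      < Real.sqrt (ε ^ 2) := Real.sqrt_lt_sqrt h0 hlt
    _ = ε := by rw [Real.sqrt_sq hε.le]
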